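/- For integers k₁ ≥ 57 and j₀ = 3k₁, the tail block T = E(0:k₁−1, j₀+1:∞) of the sine-to-cosine coefficient matrix satisfies ‖T‖_F² ≤ 4/(170π²) + (4/π²)·(3/8 + (1/2)·log 2) < (0.543)², hence ‖T‖ < 0.543. -/

import Mathlib

open Real

/-- The matrix mapping Fourier sine coefficients to Fourier cosine coefficients
on `[0,1]` (rows `k ≥ 0`, columns `j ≥ 1`; we set column `0` to zero). -/
noncomputable def Emat (k j : ℕ) : ℝ :=
  if j = 0 then 0
  else if k = 0 then (if Odd j then 2 * Real.sqrt 2 / (j * Real.pi) else 0)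
  else if Odd ((j : ℤ) - (k : ℤ)) then
    4 * (j : ℝ) / (((j : ℝ) ^ 2 - (k : ℝ) ^ 2) * Real.pi)
  else 0

/-! ### Auxiliary definitions -/

/-- The telescoping majorant function `n ↦ n/(n² − k²)`. -/
noncomputable def Gf (k n : ℕ) : ℝ := (n : ℝ) / ((n : ℝ) ^ 2 - (k : ℝ) ^ 2)

/-- Row coefficient. -/
noncomputable def Ck (k : ℕ) : ℝ := (if k = 0 then 4 else 8) / Real.pi ^ 2

/-- Book-keeping index for the telescoping induction. -/
def mfun (a k N : ℕ) : ℕ := if N ≤ a then a else if Odd (N + k) then N - 1 else N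

lemma mfun_ge (a k N : ℕ) : a ≤ mfun a k N := by
  unfold mfun
  split
  · omega
  · split <;> omega

lemma Ck_pos (k : ℕ) : 0 < Ck k := by
  unfold Ck
  have := Real.pi_pos
  split <;> positivity

lemma Gf_anti (k : ℕ) {m n : ℕ} (hm : k < m) (hmn : m ≤ n) : Gf k n ≤ Gf k m := by
  unfold Gf
  have hm' : (k : ℝ) < m := by exact_mod_cast hm
  have hn' : (m : ℝ) ≤ n := by exact_mod_cast hmn
  have hk : (0:ℝ) ≤ k := by positivity
  have h1 : (0:ℝ) < (m:ℝ)^2 - k^2 := by nlinarith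
  have h2 : (0:ℝ) < (n:ℝ)^2 - k^2 := by nlinarith
  rw [div_le_div_iff₀ h2 h1]
  nlinarith [mul_nonneg (sub_nonneg.mpr hn') (mul_nonneg (hk.trans hm'.le) (hk.trans (hm'.le.trans hn')))]

lemma Gf_nonneg (k : ℕ) {n : ℕ} (h : k < n) : 0 ≤ Gf k n := by
  unfold Gf
  have : (k:ℝ) < n := by exact_mod_cast h
  have hk : (0:ℝ) ≤ k := by positivity
  have h2 : (0:ℝ) < (n:ℝ)^2 - k^2 := by nlinarith
  positivity

lemma Emat_parity (k j : ℕ) (h : ¬ Odd (j + k)) : Emat k j = 0 := by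
  unfold Emat
  rcases eq_or_ne j 0 with rfl | hj
  · simp
  rcases eq_or_ne k 0 with rfl | hk
  · simp only [hj, if_false, if_true, ite_eq_right_iff]
    intro hodd; exact absurd (by simpa using hodd) h
  · simp only [hj, if_false, hk]
    rw [if_neg]
    intro hodd
    apply h
    have : Odd ((j:ℤ) + k) := by
      have h2 : ((j:ℤ) + k) = ((j:ℤ) - k) + 2*k := by ring
      rw [h2]
      rcases hodd with ⟨m, hm⟩
      exact ⟨m + k, by omega⟩
    exact_mod_cast this

/-! ### Pointwise bounds -/

lemma Emat_sq_le (k j : ℕ) (hj0 : j ≠ 0) (h3 : 0 < ((j:ℝ))^2 - (k:ℝ)^2) :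
    Emat k j ^ 2 ≤ (if k = 0 then (8:ℝ) else 16) * (j:ℝ)^2 /
      ((((j:ℝ))^2 - (k:ℝ)^2)^2 * Real.pi ^ 2) := by
  have hπ := Real.pi_pos
  have hx : (0:ℝ) < (j:ℝ) := by
    have : 0 < j := Nat.pos_of_ne_zero hj0
    exact_mod_cast this
  unfold Emat
  rcases eq_or_ne k 0 with rfl | hk0
  · simp only [Nat.cast_zero] at h3
    simp only [hj0, if_false, if_true, if_pos rfl, Nat.cast_zero]
    split
    · apply le_of_eq
      rw [div_pow, mul_pow, mul_pow, Real.sq_sqrt (by norm_num : (0:ℝ) ≤ 2)]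
      rw [div_eq_div_iff (by positivity) (mul_pos (pow_pos h3 2) (pow_pos hπ 2)).ne']
      ring
    · rw [zero_pow (by norm_num)]
      apply div_nonneg (by positivity) (by positivity)
  · simp only [hj0, if_false, hk0]
    split
    · apply le_of_eq
      rw [div_pow, mul_pow, mul_pow]
      norm_num
    · rw [zero_pow (by norm_num)]
      apply div_nonneg (by positivity) (by positivity)

lemma keyk (k x : ℝ) (hk : 1 ≤ k) (hx : k + 2 ≤ x) :
    16 * x^2 / ((x^2 - k^2)^2) ≤
      8 * ((x-1)/((x-1)^2 - k^2) - (x+1)/((x+1)^2 - k^2)) := by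
  have h1 : 0 < (x-1)^2 - k^2 := by nlinarith
  have h2 : 0 < (x+1)^2 - k^2 := by nlinarith
  have h3 : 0 < (x^2 - k^2)^2 := by nlinarith
  have hk2 : 1 ≤ k^2 := by nlinarith
  rw [div_sub_div _ _ h1.ne' h2.ne', ← mul_div_assoc, div_le_div_iff₀ h3 (by positivity)]
  nlinarith [mul_nonneg (sq_nonneg (x^2-k^2)) (sub_nonneg.mpr hk2), sq_nonneg x, sq_nonneg (x*k), sq_nonneg (x*x)]

lemma key0 (x : ℝ) (hx : 4 ≤ x) :
    8 * x^2 / ((x^2 - 0^2)^2) ≤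
      4 * ((x-1)/((x-1)^2 - 0^2) - (x+1)/((x+1)^2 - 0^2)) := by
  have h1 : 0 < (x-1)^2 - (0:ℝ)^2 := by nlinarith
  have h2 : 0 < (x+1)^2 - (0:ℝ)^2 := by nlinarith
  have h3 : (0:ℝ) < (x^2 - 0^2)^2 := by nlinarith
  rw [div_sub_div _ _ h1.ne' h2.ne', ← mul_div_assoc, div_le_div_iff₀ h3 (by positivity)]
  nlinarith

lemma claimA (k₁ k j : ℕ) (hk : k < k₁) (h57 : 57 ≤ k₁) (hj : 3*k₁+1 ≤ j) :
    Emat k j ^ 2 ≤ Ck k * (Gf k (j-1) - Gf k (j+1)) := by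
  have hπ := Real.pi_pos
  have hjk : 3*k+4 ≤ j := by omega
  have hj1 : (1:ℕ) ≤ j := by omega
  have hj0 : j ≠ 0 := by omega
  have hx' : ((3*k+4:ℕ):ℝ) ≤ (j:ℝ) := Nat.cast_le.mpr hjk
  push_cast at hx'
  set x := (j:ℝ) with hxdef
  have hkx : (0:ℝ) ≤ k := by positivity
  have hxpos : (0:ℝ) < x := by nlinarith
  have hc1 : ((j-1:ℕ):ℝ) = x - 1 := by
    rw [Nat.cast_sub hj1, hxdef]; norm_num
  have hc2 : ((j+1:ℕ):ℝ) = x + 1 := by push_cast; ring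
  have h1 : 0 < (x-1)^2 - (k:ℝ)^2 := by nlinarith
  have h2 : 0 < (x+1)^2 - (k:ℝ)^2 := by nlinarith
  have h3 : 0 < (x^2 - (k:ℝ)^2) := by nlinarith
  have hdelta : Gf k (j-1) - Gf k (j+1)
      = (x-1)/((x-1)^2 - (k:ℝ)^2) - (x+1)/((x+1)^2 - (k:ℝ)^2) := by
    unfold Gf; rw [hc1, hc2]
  rw [hdelta]
  have hkey : (if k = 0 then (8:ℝ) else 16) * x^2 / ((x^2-(k:ℝ)^2)^2)
      ≤ (if k = 0 then (4:ℝ) else 8) *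
        ((x-1)/((x-1)^2-(k:ℝ)^2) - (x+1)/((x+1)^2-(k:ℝ)^2)) := by
    rcases eq_or_ne k 0 with rfl | hk0
    · simp only [if_pos rfl, Nat.cast_zero]
      exact key0 x (by norm_num at hx' ⊢; linarith)
    · simp only [if_neg hk0]
      have hk1' : (1:ℝ) ≤ (k:ℝ) := by
        have : 1 ≤ k := Nat.one_le_iff_ne_zero.mpr hk0
        exact_mod_cast this
      exact keyk (k:ℝ) x hk1' (by linarith)
  have hEup := Emat_sq_le k j hj0 h3
  have hCk : Ck k = (if k = 0 then (4:ℝ) else 8) * (1/Real.pi^2) := by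
    unfold Ck; rw [div_eq_mul_one_div]
  calc Emat k j ^ 2
      ≤ (if k = 0 then (8:ℝ) else 16) * x^2 / ((x^2 - (k:ℝ)^2)^2 * Real.pi ^ 2) := hEup
    _ = ((if k = 0 then (8:ℝ) else 16) * x^2 / ((x^2 - (k:ℝ)^2)^2)) * (1/Real.pi^2) := by
        rw [div_mul_eq_div_div, div_eq_mul_one_div]
    _ ≤ ((if k = 0 then (4:ℝ) else 8) *
          ((x-1)/((x-1)^2-(k:ℝ)^2) - (x+1)/((x+1)^2-(k:ℝ)^2))) * (1/Real.pi^2) := by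
        apply mul_le_mul_of_nonneg_right hkey (by positivity)
    _ = Ck k * ((x-1)/((x-1)^2-(k:ℝ)^2) - (x+1)/((x+1)^2-(k:ℝ)^2)) := by
        rw [hCk]; ring

/-! ### Telescoping partial sums -/

lemma partial_le (k₁ k : ℕ) (hk : k < k₁) (h57 : 57 ≤ k₁) (N : ℕ) :
    ∑ j ∈ Finset.range N, (if 3*k₁+1 ≤ j then Emat k j ^ 2 else 0)
      ≤ Ck k * (Gf k (3*k₁) - Gf k (mfun (3*k₁) k N)) := by
  have hka : k < 3*k₁ := by omega
  induction N with
  | zero =>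
      simp [mfun]
  | succ N ih =>
      rw [Finset.sum_range_succ]
      by_cases hN : N ≤ 3*k₁
      · have hterm : (if 3*k₁+1 ≤ N then Emat k N ^ 2 else 0) = 0 := by
          rw [if_neg]; omega
        rw [hterm, add_zero]
        have hmN : mfun (3*k₁) k N = 3*k₁ := if_pos hN
        rw [hmN] at ih
        refine ih.trans ?_
        have hmono : Gf k (mfun (3*k₁) k (N+1)) ≤ Gf k (3*k₁) :=
          Gf_anti k hka (mfun_ge _ _ _)
        nlinarith [Ck_pos k]
      · push_neg at hN
        by_cases hodd : Odd (N + k)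
        · have hterm : (if 3*k₁+1 ≤ N then Emat k N ^ 2 else 0) = Emat k N ^ 2 :=
            if_pos (by omega)
          rw [hterm]
          have hA := claimA k₁ k N hk h57 (by omega)
          have hmN : mfun (3*k₁) k N = N - 1 := by
            unfold mfun; rw [if_neg (by omega), if_pos hodd]
          have hmN1 : mfun (3*k₁) k (N+1) = N + 1 := by
            unfold mfun
            rw [if_neg (by omega), if_neg]
            rw [show N+1+k = (N+k)+1 by omega, Nat.odd_add_one]
            simpa using hodd
          rw [hmN] at ih
          rw [hmN1]
          have e : Ck k * (Gf k (3*k₁) - Gf k (N-1)) + Ck k * (Gf k (N-1) - Gf k (N+1))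
              = Ck k * (Gf k (3*k₁) - Gf k (N+1)) := by ring
          linarith [ih, hA]
        · have hterm : (if 3*k₁+1 ≤ N then Emat k N ^ 2 else 0) = 0 := by
            rw [Emat_parity k N hodd]
            simp
          rw [hterm, add_zero]
          have hmN : mfun (3*k₁) k N = N := by
            unfold mfun; rw [if_neg (by omega), if_neg hodd]
          have hmN1 : mfun (3*k₁) k (N+1) = N := by
            unfold mfun
            rw [if_neg (by omega), if_pos]
            · omega
            · rw [show N+1+k = (N+k)+1 by omega, Nat.odd_add_one]
              exact hodd
          rw [hmN] at ih
          rw [hmN1]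
          exact ih

lemma row_le (k₁ k : ℕ) (hk : k < k₁) (h57 : 57 ≤ k₁) :
    ∑' j : ℕ, (if 3*k₁+1 ≤ j then Emat k j ^ 2 else 0) ≤ Ck k * Gf k (3*k₁) := by
  apply Real.tsum_le_of_sum_range_le
  · intro n
    split
    · positivity
    · exact le_refl 0
  · intro n
    refine (partial_le k₁ k hk h57 n).trans ?_
    have h0 : 0 ≤ Gf k (mfun (3*k₁) k n) :=
      Gf_nonneg k (lt_of_lt_of_le (show k < 3*k₁ by omega) (mfun_ge _ _ _))
    nlinarith [Ck_pos k]

/-! ### Harmonic sums vs logarithms -/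

lemma log_gap {m : ℝ} (hm : 2 ≤ m) : 1/m ≤ Real.log m - Real.log (m-1) := by
  have h0 : (0:ℝ) < m := by linarith
  have h1 : (0:ℝ) < m - 1 := by linarith
  have h := Real.log_le_sub_one_of_pos (show (0:ℝ) < (m-1)/m by positivity)
  rw [Real.log_div h1.ne' h0.ne'] at h
  have e : (m-1)/m - 1 = -(1/m) := by field_simp; ring
  rw [e] at h
  linarith

lemma sum_harmonic (k₁ : ℕ) (h57 : 57 ≤ k₁) :
    ∑ i ∈ Finset.range (k₁-1),
        (1/(3*(k₁:ℝ) - ((i:ℝ)+1)) + 1/(3*(k₁:ℝ) + ((i:ℝ)+1))) ≤ Real.log 2 := by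
  have hk1 : (57:ℝ) ≤ (k₁:ℝ) := by exact_mod_cast h57
  have hcast : ((k₁-1:ℕ):ℝ) = (k₁:ℝ) - 1 := by
    rw [Nat.cast_sub (by omega)]; norm_num
  have hA : ∑ i ∈ Finset.range (k₁-1), (1/(3*(k₁:ℝ) - ((i:ℝ)+1)))
      ≤ Real.log (3*(k₁:ℝ)-1) - Real.log (2*(k₁:ℝ)) := by
    have e := Finset.sum_range_sub' (fun i : ℕ => Real.log (3*(k₁:ℝ) - 1 - (i:ℝ))) (k₁-1)
    have e2 : Real.log (3*(k₁:ℝ) - 1 - ((0:ℕ):ℝ)) - Real.log (3*(k₁:ℝ) - 1 - ((k₁-1:ℕ):ℝ))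
        = Real.log (3*(k₁:ℝ)-1) - Real.log (2*(k₁:ℝ)) := by
      rw [hcast]
      norm_num
      ring_nf
    calc ∑ i ∈ Finset.range (k₁-1), (1/(3*(k₁:ℝ) - ((i:ℝ)+1)))
        ≤ ∑ i ∈ Finset.range (k₁-1),
            (Real.log (3*(k₁:ℝ) - 1 - (i:ℝ)) - Real.log (3*(k₁:ℝ) - 1 - ((i+1:ℕ):ℝ))) := by
          apply Finset.sum_le_sum
          intro i hi
          have hi' : (i:ℝ) ≤ (k₁:ℝ) - 2 := by
            have hii : i ≤ k₁ - 2 := by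
              have := Finset.mem_range.mp hi; omega
            have h2 : ((i:ℕ):ℝ) ≤ ((k₁-2:ℕ):ℝ) := Nat.cast_le.mpr hii
            rw [Nat.cast_sub (by omega)] at h2
            push_cast at h2
            linarith
          have hgap := log_gap (m := 3*(k₁:ℝ) - ((i:ℝ)+1)) (by linarith)
          rw [show (3*(k₁:ℝ) - 1 - (i:ℝ)) = 3*(k₁:ℝ) - ((i:ℝ)+1) - 1 + 1 from by ring,
              show (3*(k₁:ℝ) - 1 - ((i+1:ℕ):ℝ)) = 3*(k₁:ℝ) - ((i:ℝ)+1) - 1 from by push_cast; ring,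
              show (3*(k₁:ℝ) - ((i:ℝ)+1) - 1 + 1) = 3*(k₁:ℝ) - ((i:ℝ)+1) from by ring]
          exact hgap
      _ = Real.log (3*(k₁:ℝ)-1) - Real.log (2*(k₁:ℝ)) := by rw [e, e2]
  have hB : ∑ i ∈ Finset.range (k₁-1), (1/(3*(k₁:ℝ) + ((i:ℝ)+1)))
      ≤ Real.log (4*(k₁:ℝ)-1) - Real.log (3*(k₁:ℝ)) := by
    have e := Finset.sum_range_sub (fun i : ℕ => Real.log (3*(k₁:ℝ) + (i:ℝ))) (k₁-1)
    have e2 : Real.log (3*(k₁:ℝ) + ((k₁-1:ℕ):ℝ)) - Real.log (3*(k₁:ℝ) + ((0:ℕ):ℝ))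
        = Real.log (4*(k₁:ℝ)-1) - Real.log (3*(k₁:ℝ)) := by
      rw [hcast]
      norm_num
      ring_nf
    calc ∑ i ∈ Finset.range (k₁-1), (1/(3*(k₁:ℝ) + ((i:ℝ)+1)))
        ≤ ∑ i ∈ Finset.range (k₁-1),
            (Real.log (3*(k₁:ℝ) + ((i+1:ℕ):ℝ)) - Real.log (3*(k₁:ℝ) + (i:ℝ))) := by
          apply Finset.sum_le_sum
          intro i hi
          have hi0 : (0:ℝ) ≤ (i:ℝ) := Nat.cast_nonneg i
          have hgap := log_gap (m := 3*(k₁:ℝ) + ((i:ℝ)+1)) (by linarith)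
          rw [show (3*(k₁:ℝ) + ((i+1:ℕ):ℝ)) = 3*(k₁:ℝ) + ((i:ℝ)+1) from by push_cast; ring,
              show (3*(k₁:ℝ) + (i:ℝ)) = 3*(k₁:ℝ) + ((i:ℝ)+1) - 1 from by ring]
          exact hgap
      _ = Real.log (4*(k₁:ℝ)-1) - Real.log (3*(k₁:ℝ)) := by rw [e, e2]
  have hcomb : Real.log (3*(k₁:ℝ)-1) - Real.log (2*(k₁:ℝ))
      + (Real.log (4*(k₁:ℝ)-1) - Real.log (3*(k₁:ℝ))) ≤ Real.log 2 := by
    have p1 : (0:ℝ) < 3*(k₁:ℝ)-1 := by linarith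
    have p2 : (0:ℝ) < 2*(k₁:ℝ) := by linarith
    have p3 : (0:ℝ) < 4*(k₁:ℝ)-1 := by linarith
    have p4 : (0:ℝ) < 3*(k₁:ℝ) := by linarith
    have hlog : Real.log ((3*(k₁:ℝ)-1) * (4*(k₁:ℝ)-1))
        ≤ Real.log (2 * (2*(k₁:ℝ) * (3*(k₁:ℝ)))) := by
      apply Real.log_le_log (by positivity)
      nlinarith
    rw [Real.log_mul p1.ne' p3.ne', Real.log_mul (by norm_num) (by positivity),
        Real.log_mul p2.ne' p4.ne'] at hlog
    linarith
  rw [Finset.sum_add_distrib]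
  linarith

/-! ### Summability and Cauchy–Schwarz -/

lemma row_summable (k₁ k : ℕ) (hk : k < k₁) (h57 : 57 ≤ k₁) :
    Summable (fun j : ℕ => if 3*k₁+1 ≤ j then Emat k j ^ 2 else 0) := by
  have hπ := Real.pi_pos
  have hπ2 : (9:ℝ) < Real.pi^2 := by
    nlinarith [Real.pi_gt_d6]
  apply Summable.of_nonneg_of_le
    (g := fun j : ℕ => if 3*k₁+1 ≤ j then Emat k j ^ 2 else 0)
    (f := fun j : ℕ => 3 * (1/(j:ℝ)^2))
  · intro j
    split
    · positivity
    · exact le_refl 0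
  · intro j
    split
    · rename_i hj
      have hjk : 3*k+4 ≤ j := by omega
      have hx' : ((3*k+4:ℕ):ℝ) ≤ (j:ℝ) := Nat.cast_le.mpr hjk
      push_cast at hx'
      have hkx : (0:ℝ) ≤ k := by positivity
      have hxpos : (0:ℝ) < (j:ℝ) := by nlinarith
      have h3 : 0 < ((j:ℝ))^2 - (k:ℝ)^2 := by nlinarith
      refine (Emat_sq_le k j (by omega) h3).trans ?_
      have hco : (if k = 0 then (8:ℝ) else 16) ≤ 16 := by split <;> norm_num
      have hnum : (if k = 0 then (8:ℝ) else 16) * (j:ℝ)^2 ≤ 16 * (j:ℝ)^2 := by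
        apply mul_le_mul_of_nonneg_right hco (by positivity)
      have h89 : (8/9) * (j:ℝ)^2 ≤ ((j:ℝ))^2 - (k:ℝ)^2 := by nlinarith
      rw [div_le_iff₀ (by positivity)]
      have expand : 3 * (1/(j:ℝ)^2) * (((j:ℝ)^2 - (k:ℝ)^2)^2 * Real.pi^2)
          = 3 * (((j:ℝ)^2 - (k:ℝ)^2)^2 * Real.pi^2) / (j:ℝ)^2 := by ring
      rw [expand, le_div_iff₀ (by positivity)]
      nlinarith [sq_nonneg ((j:ℝ)^2 - (k:ℝ)^2), mul_le_mul h89 h89 (by positivity) (by positivity)]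
    · positivity
  · have hs : Summable (fun j : ℕ => 1/(j:ℝ)^2) := by
      exact_mod_cast summable_one_div_nat_pow.mpr (by norm_num)
    exact hs.mul_left 3

lemma tsum_cs (a b : ℕ → ℝ) (ha : Summable (fun j => a j ^ 2))
    (hb : Summable (fun j => b j ^ 2)) :
    (∑' j : ℕ, a j * b j) ^ 2 ≤ (∑' j : ℕ, a j ^ 2) * (∑' j : ℕ, b j ^ 2) := by
  set A := ∑' j : ℕ, a j ^ 2 with hA
  set B := ∑' j : ℕ, b j ^ 2 with hB
  have hA0 : 0 ≤ A := tsum_nonneg (fun _ => sq_nonneg _)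
  have hB0 : 0 ≤ B := tsum_nonneg (fun _ => sq_nonneg _)
  have habs : Summable (fun j => |a j * b j|) := by
    apply Summable.of_nonneg_of_le (fun j => abs_nonneg _) (fun j => ?_)
      ((ha.add hb).mul_left (1/2))
    rw [abs_mul]
    nlinarith [sq_nonneg (|a j| - |b j|), sq_abs (a j), sq_abs (b j),
      abs_nonneg (a j), abs_nonneg (b j)]
  have hsum : Summable (fun j => a j * b j) := habs.of_abs
  have hle : ∀ s : Finset ℕ, ∑ j ∈ s, |a j * b j| ≤ Real.sqrt (A*B) := by
    intro s
    have h1 : (∑ j ∈ s, |a j| * |b j|) ^ 2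
        ≤ (∑ j ∈ s, |a j| ^ 2) * (∑ j ∈ s, |b j| ^ 2) :=
      Finset.sum_mul_sq_le_sq_mul_sq s _ _
    have h2 : (∑ j ∈ s, |a j| ^ 2) ≤ A := by
      rw [hA]
      refine le_trans (le_of_eq ?_) (Summable.sum_le_tsum s (fun i _ => sq_nonneg _) ha)
      exact Finset.sum_congr rfl (fun j _ => sq_abs (a j))
    have h3 : (∑ j ∈ s, |b j| ^ 2) ≤ B := by
      rw [hB]
      refine le_trans (le_of_eq ?_) (Summable.sum_le_tsum s (fun i _ => sq_nonneg _) hb)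
      exact Finset.sum_congr rfl (fun j _ => sq_abs (b j))
    have h4 : (∑ j ∈ s, |a j * b j|) ^ 2 ≤ A * B := by
      have e : ∑ j ∈ s, |a j * b j| = ∑ j ∈ s, |a j| * |b j| :=
        Finset.sum_congr rfl (fun j _ => abs_mul _ _)
      rw [e]
      calc (∑ j ∈ s, |a j| * |b j|) ^ 2
          ≤ (∑ j ∈ s, |a j| ^ 2) * (∑ j ∈ s, |b j| ^ 2) := h1
        _ ≤ A * B := by
            apply mul_le_mul h2 h3 (Finset.sum_nonneg (fun j _ => sq_nonneg _)) hA0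
    rw [Real.le_sqrt (Finset.sum_nonneg (fun j _ => abs_nonneg _)) (by positivity)]
    exact h4
  have h5 : ∑' j : ℕ, |a j * b j| ≤ Real.sqrt (A*B) := Summable.tsum_le_of_sum_le habs hle
  have h6 : |∑' j : ℕ, a j * b j| ≤ ∑' j : ℕ, |a j * b j| := by
    have := norm_tsum_le_tsum_norm (f := fun j : ℕ => a j * b j)
      (by simpa only [Real.norm_eq_abs] using habs)
    simpa only [Real.norm_eq_abs] using this
  calc (∑' j : ℕ, a j * b j) ^ 2 = |∑' j : ℕ, a j * b j| ^ 2 := (sq_abs _).symm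
    _ ≤ (Real.sqrt (A*B)) ^ 2 := by
        apply pow_le_pow_left₀ (abs_nonneg _) (h6.trans h5)
    _ = A * B := Real.sq_sqrt (by positivity)

/-! ### Numerics -/

lemma numeric_bound :
    4 / (170 * Real.pi ^ 2) + (4 / Real.pi ^ 2) * (3 / 8 + (1 / 2) * Real.log 2)
      < (0.543 : ℝ) ^ 2 := by
  have hπ := Real.pi_gt_d6
  have hπ0 := Real.pi_pos
  have hlog := Real.log_two_lt_d9
  have hπ2 : (0:ℝ) < Real.pi ^ 2 := by positivity
  have e : 4 / (170 * Real.pi ^ 2) + (4 / Real.pi ^ 2) * (3 / 8 + (1 / 2) * Real.log 2)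
      = (4/170 + 3/2 + 2 * Real.log 2) / Real.pi ^ 2 := by
    field_simp
    ring
  rw [e, div_lt_iff₀ hπ2]
  nlinarith [Real.log_two_gt_d9]

/-! ### Main theorem -/

/-- Case 3: for `k₁ ≥ 57` and `j₀ = 3k₁`, the tail block
`T = E(0:k₁−1, 3k₁+1:∞)` satisfies
`‖T‖_F² ≤ 4/(170π²) + (4/π²)(3/8 + (1/2)log 2) < (0.543)²`; in particular,
for any unit vector `b` the image `Tb` has norm `< 0.543`. -/
theorem tail_block_frobenius_bound (k₁ : ℕ) (hk₁ : 57 ≤ k₁) :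
    (∑ k ∈ Finset.range k₁, ∑' j : ℕ,
        (if 3 * k₁ + 1 ≤ j then (Emat k j) ^ 2 else 0))
      ≤ 4 / (170 * Real.pi ^ 2) + (4 / Real.pi ^ 2) * (3 / 8 + (1 / 2) * Real.log 2)
    ∧ 4 / (170 * Real.pi ^ 2) + (4 / Real.pi ^ 2) * (3 / 8 + (1 / 2) * Real.log 2)
        < (0.543 : ℝ) ^ 2
    ∧ ∀ b : ℕ → ℝ, Summable (fun j => (b j) ^ 2) → (∑' j : ℕ, (b j) ^ 2) ≤ 1 →
        ∑ k ∈ Finset.range k₁,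
            (∑' j : ℕ, (if 3 * k₁ + 1 ≤ j then Emat k j * b j else 0)) ^ 2
          < (0.543 : ℝ) ^ 2 := by
  have hπ := Real.pi_pos
  have hπ2 : (0:ℝ) < Real.pi ^ 2 := by positivity
  -- Part 1
  have hsplit : ∑ k ∈ Finset.range k₁, Ck k * Gf k (3*k₁)
      = (∑ i ∈ Finset.range (k₁-1), Ck (i+1) * Gf (i+1) (3*k₁)) + Ck 0 * Gf 0 (3*k₁) := by
    have h := Finset.sum_range_succ' (fun k => Ck k * Gf k (3*k₁)) (k₁-1)
    rw [show (k₁-1)+1 = k₁ by omega] at h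
    exact h
  have h0 : Ck 0 * Gf 0 (3*k₁) ≤ 4/(170 * Real.pi^2) := by
    have hc : (171:ℝ) ≤ ((3*k₁:ℕ):ℝ) := by exact_mod_cast (by omega : 171 ≤ 3*k₁)
    have hcpos : (0:ℝ) < ((3*k₁:ℕ):ℝ) := by linarith
    have e1 : Ck 0 = 4/Real.pi^2 := by unfold Ck; norm_num
    have e2 : Gf 0 (3*k₁) = ((3*k₁:ℕ):ℝ)/(((3*k₁:ℕ):ℝ)^2 - 0^2) := by
      unfold Gf; norm_num
    rw [e1, e2]
    have e : (4:ℝ)/Real.pi^2 * (((3*k₁:ℕ):ℝ)/(((3*k₁:ℕ):ℝ)^2 - 0^2))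
        = 4/(((3*k₁:ℕ):ℝ) * Real.pi^2) := by
      field_simp
      ring
    rw [e, div_le_div_iff₀ (by positivity) (by positivity)]
    nlinarith
  have hrest : ∑ i ∈ Finset.range (k₁-1), Ck (i+1) * Gf (i+1) (3*k₁)
      ≤ (4/Real.pi^2) * Real.log 2 := by
    have hterm : ∀ i ∈ Finset.range (k₁-1),
        Ck (i+1) * Gf (i+1) (3*k₁)
          = (4/Real.pi^2) * (1/(3*(k₁:ℝ) - ((i:ℝ)+1)) + 1/(3*(k₁:ℝ) + ((i:ℝ)+1))) := by
      intro i hi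
      have hi' : i < k₁ - 1 := Finset.mem_range.mp hi
      have hiR : (i:ℝ) + 1 ≤ (k₁:ℝ) - 1 := by
        have : ((i+1:ℕ):ℝ) ≤ ((k₁-1:ℕ):ℝ) := Nat.cast_le.mpr (by omega)
        rw [Nat.cast_sub (by omega)] at this
        push_cast at this
        linarith
      have hk1 : (57:ℝ) ≤ (k₁:ℝ) := by exact_mod_cast hk₁
      unfold Ck Gf
      rw [if_neg (Nat.succ_ne_zero i)]
      push_cast
      have d1 : 3*(k₁:ℝ) - ((i:ℝ)+1) > 0 := by linarith
      have d2 : 3*(k₁:ℝ) + ((i:ℝ)+1) > 0 := by linarith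
      have d3 : (3*(k₁:ℝ))^2 - ((i:ℝ)+1)^2 > 0 := by nlinarith
      rw [show (3*(k₁:ℝ))^2 - ((i:ℝ)+1)^2 = (3*(k₁:ℝ) - ((i:ℝ)+1)) * (3*(k₁:ℝ) + ((i:ℝ)+1)) by ring,
        div_add_div _ _ d1.ne' d2.ne', mul_div_assoc', mul_div_assoc']
      congr 1; ring
    rw [Finset.sum_congr rfl hterm, ← Finset.mul_sum]
    apply mul_le_mul_of_nonneg_left (sum_harmonic k₁ hk₁) (by positivity)
  have hlog34 : Real.log 2 ≤ 3/4 := by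
    nlinarith [Real.log_two_lt_d9]
  have part1 : (∑ k ∈ Finset.range k₁, ∑' j : ℕ,
        (if 3 * k₁ + 1 ≤ j then (Emat k j) ^ 2 else 0))
      ≤ 4 / (170 * Real.pi ^ 2) + (4 / Real.pi ^ 2) * (3 / 8 + (1 / 2) * Real.log 2) := by
    calc ∑ k ∈ Finset.range k₁, ∑' j : ℕ, (if 3 * k₁ + 1 ≤ j then (Emat k j) ^ 2 else 0)
        ≤ ∑ k ∈ Finset.range k₁, Ck k * Gf k (3*k₁) := by
          apply Finset.sum_le_sum
          intro k hk
          exact row_le k₁ k (Finset.mem_range.mp hk) hk₁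
      _ = (∑ i ∈ Finset.range (k₁-1), Ck (i+1) * Gf (i+1) (3*k₁)) + Ck 0 * Gf 0 (3*k₁) := hsplit
      _ ≤ (4/Real.pi^2) * Real.log 2 + 4/(170 * Real.pi^2) := by
          exact add_le_add hrest h0
      _ ≤ 4 / (170 * Real.pi ^ 2) + (4 / Real.pi ^ 2) * (3 / 8 + (1 / 2) * Real.log 2) := by
          have : (4/Real.pi^2) * Real.log 2 ≤ (4/Real.pi^2) * (3/8 + (1/2) * Real.log 2) := by
            apply mul_le_mul_of_nonneg_left (by linarith) (by positivity)
          linarith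
  refine ⟨part1, numeric_bound, ?_⟩
  -- Part 3
  intro b hb hb1
  have hper : ∀ k, k < k₁ →
      (∑' j : ℕ, (if 3 * k₁ + 1 ≤ j then Emat k j * b j else 0)) ^ 2
        ≤ ∑' j : ℕ, (if 3 * k₁ + 1 ≤ j then (Emat k j) ^ 2 else 0) := by
    intro k hk
    set a : ℕ → ℝ := fun j => if 3*k₁+1 ≤ j then Emat k j else 0 with ha
    have e1 : (∑' j : ℕ, (if 3 * k₁ + 1 ≤ j then Emat k j * b j else 0))
        = ∑' j : ℕ, a j * b j := by
      apply tsum_congr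
      intro j
      by_cases h : 3*k₁+1 ≤ j <;> simp [ha, h] <;> omega
    have e2 : (fun j : ℕ => a j ^ 2)
        = fun j : ℕ => if 3*k₁+1 ≤ j then Emat k j ^ 2 else 0 := by
      funext j
      by_cases h : 3*k₁+1 ≤ j <;> simp [ha, h] <;> omega
    have ha2 : Summable (fun j => a j ^ 2) := by
      rw [e2]; exact row_summable k₁ k hk hk₁
    rw [e1]
    calc (∑' j : ℕ, a j * b j) ^ 2
        ≤ (∑' j : ℕ, a j ^ 2) * (∑' j : ℕ, b j ^ 2) := tsum_cs a b ha2 hb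
      _ ≤ (∑' j : ℕ, a j ^ 2) * 1 := by
          apply mul_le_mul_of_nonneg_left hb1 (tsum_nonneg (fun _ => sq_nonneg _))
      _ = ∑' j : ℕ, (if 3 * k₁ + 1 ≤ j then (Emat k j) ^ 2 else 0) := by
          rw [mul_one, e2]
  calc ∑ k ∈ Finset.range k₁,
          (∑' j : ℕ, (if 3 * k₁ + 1 ≤ j then Emat k j * b j else 0)) ^ 2
      ≤ ∑ k ∈ Finset.range k₁, ∑' j : ℕ, (if 3 * k₁ + 1 ≤ j then (Emat k j) ^ 2 else 0) := by
        apply Finset.sum_le_sum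
        intro k hk
        exact hper k (Finset.mem_range.mp hk)
    _ ≤ 4 / (170 * Real.pi ^ 2) + (4 / Real.pi ^ 2) * (3 / 8 + (1 / 2) * Real.log 2) := part1
    _ < (0.543 : ℝ) ^ 2 := numeric_bound
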